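/- Let J ≥ 1 be an integer, A > 0, C > 0, and let φ : [0,∞) → ℂ be of class C^J with φ^{(j)}(0) = 0 and |φ^{(j)}(x)| ≤ C·(1+x)^{−A} for all x ≥ 0 and all 0 ≤ j ≤ J. Then for every fixed ξ ∈ ℝ with −J < ξ < A − J, the Mellin transform φ̃(u) = ∫_0^∞ t^{u−1}·φ(t) dt converges absolutely for all u with Re u = ξ, and there exists a constant C′ = C′(ξ, J, A, C) such that |φ̃(ξ + it)| ≤ C′·(1 + |t|)^{−J} for all t ∈ ℝ. -/

import Mathlib

open MeasureTheory Set Filter Real Complex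

/-- Mellin transform bound: if `φ` is `C^J` on `[0,∞)` with `φ^{(j)}(0) = 0` and
`|φ^{(j)}(x)| ≤ C(1+x)^{−A}` for `0 ≤ j ≤ J`, then for `−J < ξ < A − J` the Mellin
transform `φ̃(u) = ∫₀^∞ t^{u−1} φ(t) dt` converges absolutely on `Re u = ξ` and
`|φ̃(ξ+it)| ≤ C′(1+|t|)^{−J}`. -/
theorem stmt_12 (J : ℕ) (hJ : 1 ≤ J) (A C : ℝ) (hA : 0 < A) (hC : 0 < C)
    (φ : ℝ → ℂ) (hφ : ContDiffOn ℝ J φ (Set.Ici 0))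
    (hφ0 : ∀ j : ℕ, j ≤ J → iteratedDerivWithin j φ (Set.Ici 0) 0 = 0)
    (hφb : ∀ j : ℕ, j ≤ J → ∀ x : ℝ, 0 ≤ x →
      ‖iteratedDerivWithin j φ (Set.Ici 0) x‖ ≤ C * (1 + x) ^ (-A))
    (ξ : ℝ) (hξ1 : -(J : ℝ) < ξ) (hξ2 : ξ < A - J) :
    (∀ u : ℂ, u.re = ξ →
      MeasureTheory.IntegrableOn (fun t : ℝ => ((t : ℂ)) ^ (u - 1) * φ t) (Set.Ioi 0)) ∧
    ∃ C' : ℝ, ∀ t : ℝ,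
      ‖∫ x in Set.Ioi (0 : ℝ), ((x : ℂ)) ^ (((ξ : ℂ) + (t : ℂ) * Complex.I) - 1) * φ x‖
        ≤ C' * (1 + |t|) ^ (-(J : ℝ)) := by
  set Φ : ℕ → ℝ → ℂ := fun j => iteratedDerivWithin j φ (Set.Ici 0) with hΦ
  have uds : UniqueDiffOn ℝ (Set.Ici (0:ℝ)) := uniqueDiffOn_Ici 0
  -- derivative relation on `Ioi 0`
  have hder : ∀ j : ℕ, j < J → ∀ x : ℝ, 0 < x → HasDerivAt (Φ j) (Φ (j+1) x) x := by
    intro j hj x hx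
    have hmem : Set.Ici (0:ℝ) ∈ nhds x := Ici_mem_nhds hx
    have hd : DifferentiableWithinAt ℝ (Φ j) (Set.Ici 0) x :=
      (hφ.differentiableOn_iteratedDerivWithin (by exact_mod_cast hj) uds) x (le_of_lt hx)
    have hda : DifferentiableAt ℝ (Φ j) x := hd.differentiableAt hmem
    have h1 : Φ (j+1) x = deriv (Φ j) x := by
      show iteratedDerivWithin (j+1) φ (Set.Ici 0) x = _
      rw [iteratedDerivWithin_succ]
      exact derivWithin_of_mem_nhds hmem
    rw [h1]
    exact hda.hasDerivAt
  have hdw : ∀ j : ℕ, j < J → ∀ y : ℝ, 0 ≤ y → HasDerivWithinAt (Φ j) (Φ (j+1) y) (Set.Ici 0) y := by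
    intro j hj y hy
    have hd : DifferentiableWithinAt ℝ (Φ j) (Set.Ici 0) y :=
      (hφ.differentiableOn_iteratedDerivWithin (by exact_mod_cast hj) uds) y hy
    have := hd.hasDerivWithinAt
    rwa [← iteratedDerivWithin_succ] at this
  -- polynomial bound near 0 from Taylor/MVT
  have key : ∀ k j : ℕ, j + k = J → ∀ x : ℝ, 0 ≤ x → ‖Φ j x‖ ≤ C * x ^ k := by
    intro k
    induction k with
    | zero =>
      intro j hjk x hx
      have := hφb j (by omega) x hx
      have h1 : (1 + x) ^ (-A) ≤ 1 :=
        Real.rpow_le_one_of_one_le_of_nonpos (by linarith) (by linarith)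
      calc ‖Φ j x‖ ≤ C * (1 + x) ^ (-A) := this
        _ ≤ C * 1 := by nlinarith
        _ = C * x ^ 0 := by ring
    | succ k ih =>
      intro j hjk x hx
      rcases eq_or_lt_of_le hx with h0 | h0
      · rw [← h0]
        simp [hΦ, hφ0 j (by omega)]
      have hΦ0 : Φ j 0 = 0 := hφ0 j (by omega)
      have hmvt : ‖Φ j x - Φ j 0‖ ≤ (C * x ^ k) * ‖x - 0‖ := by
        apply Convex.norm_image_sub_le_of_norm_hasDerivWithin_le
          (f' := fun y => Φ (j+1) y) ?_ ?_ (convex_Icc 0 x) ?_ ?_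
        · intro y hy
          exact (hdw j (by omega) y hy.1).mono Icc_subset_Ici_self
        · intro y hy
          have := ih (j+1) (by omega) y hy.1
          have hyx : y ^ k ≤ x ^ k := pow_le_pow_left₀ hy.1 hy.2 k
          calc ‖Φ (j+1) y‖ ≤ C * y ^ k := this
            _ ≤ C * x ^ k := by nlinarith
        · exact ⟨le_refl 0, hx⟩
        · exact ⟨hx, le_refl x⟩
      rw [hΦ0, sub_zero, sub_zero] at hmvt
      calc ‖Φ j x‖ ≤ (C * x ^ k) * ‖x‖ := hmvt
        _ = C * x ^ (k+1) := by rw [Real.norm_eq_abs, _root_.abs_of_nonneg hx]; ring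
  have hpow : ∀ j : ℕ, j ≤ J → ∀ x : ℝ, 0 ≤ x → ‖Φ j x‖ ≤ C * x ^ (J - j) :=
    fun j hj x hx => key (J - j) j (by omega) x hx
  have hcont : ∀ j : ℕ, j ≤ J → ContinuousOn (Φ j) (Set.Ici 0) :=
    fun j hj => hφ.continuousOn_iteratedDerivWithin (by exact_mod_cast hj) uds
  have hcpow : ∀ w : ℂ, ContinuousOn (fun x : ℝ => (x:ℂ) ^ w) (Set.Ioi 0) := by
    intro w x hx
    exact ((_root_.continuousAt_cpow_const (Complex.ofReal_mem_slitPlane.2 hx)).comp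
      Complex.continuous_ofReal.continuousAt).continuousWithinAt
  have hmeas : ∀ j : ℕ, j ≤ J → ∀ w : ℂ, MeasureTheory.AEStronglyMeasurable
      (fun x : ℝ => (x:ℂ)^w * Φ j x) (MeasureTheory.volume.restrict (Set.Ioi 0)) :=
    fun j hj w => (((hcpow w).mul ((hcont j hj).mono Set.Ioi_subset_Ici_self)).aestronglyMeasurable
      measurableSet_Ioi)
  have hnormeq : ∀ (w : ℂ) (f : ℝ → ℂ) (x : ℝ), 0 < x → ‖(x:ℂ)^w * f x‖ = x ^ w.re * ‖f x‖ := by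
    intro w f x hx
    rw [norm_mul, norm_cpow_eq_rpow_re_of_pos hx]
  have hcast : ∀ j : ℕ, j ≤ J → ((J - j : ℕ) : ℝ) = (J : ℝ) - j := fun j hj => by
    push_cast [Nat.cast_sub hj]; ring
  have hInt : ∀ j : ℕ, j ≤ J → ∀ w : ℂ, w.re = ξ + j - 1 →
      MeasureTheory.IntegrableOn (fun x : ℝ => (x:ℂ)^w * Φ j x) (Set.Ioi 0) := by
    intro j hj w hw
    have h01 : MeasureTheory.IntegrableOn (fun x : ℝ => (x:ℂ)^w * Φ j x) (Set.Ioc 0 1) := by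
      apply MeasureTheory.Integrable.mono' (g := fun x : ℝ => C * x ^ (ξ + J - 1))
      · have h : MeasureTheory.IntegrableOn (fun x : ℝ => C * x ^ (ξ + (J:ℝ) - 1)) (Set.Ioc 0 1) :=
          (integrableOn_Ioc_iff_integrableOn_Ioo (hb := enorm_ne_top)).2
            (((intervalIntegral.integrableOn_Ioo_rpow_iff one_pos).2 (by linarith)).const_mul C)
        exact h
      · exact (hmeas j hj w).mono_measure
          (MeasureTheory.Measure.restrict_mono Set.Ioc_subset_Ioi_self le_rfl)
      · rw [MeasureTheory.ae_restrict_iff' measurableSet_Ioc]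
        filter_upwards with x hx
        rw [hnormeq w _ x hx.1, hw]
        calc x ^ (ξ + j - 1) * ‖Φ j x‖ ≤ x ^ (ξ + j - 1) * (C * x ^ (J - j)) := by
              have := hpow j hj x hx.1.le
              have hxp : (0:ℝ) ≤ x ^ (ξ + j - 1) := Real.rpow_nonneg hx.1.le _
              nlinarith [norm_nonneg (Φ j x)]
          _ = C * x ^ (ξ + (J:ℝ) - 1) := by
              have he : x ^ (ξ + (J:ℝ) - 1) = x ^ (ξ + (j:ℝ) - 1) * x ^ ((J:ℝ) - j) := by
                rw [← Real.rpow_add hx.1]; ring_nf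
              rw [← Real.rpow_natCast x (J - j), hcast j hj, he]; ring
    have h1i : MeasureTheory.IntegrableOn (fun x : ℝ => (x:ℂ)^w * Φ j x) (Set.Ioi 1) := by
      apply MeasureTheory.Integrable.mono' (g := fun x : ℝ => C * x ^ (ξ + J - 1 - A))
      · exact (integrableOn_Ioi_rpow_of_lt (by linarith) one_pos).const_mul C
      · exact (hmeas j hj w).mono_measure
          (MeasureTheory.Measure.restrict_mono (Set.Ioi_subset_Ioi zero_le_one) le_rfl)
      · rw [MeasureTheory.ae_restrict_iff' measurableSet_Ioi]
        filter_upwards with x hx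
        have hx0 : (0:ℝ) < x := lt_trans one_pos hx
        rw [hnormeq w _ x hx0, hw]
        have hb := hφb j hj x hx0.le
        have h2 : (1 + x) ^ (-A) ≤ x ^ (-A) :=
          Real.rpow_le_rpow_of_nonpos hx0 (by linarith) (by linarith)
        have hxp : (0:ℝ) ≤ x ^ (ξ + j - 1) := Real.rpow_nonneg hx0.le _
        have hb2 : ‖Φ j x‖ ≤ C * x ^ (-A) :=
          le_trans hb (mul_le_mul_of_nonneg_left h2 hC.le)
        calc x ^ (ξ + j - 1) * ‖Φ j x‖ ≤ x ^ (ξ + j - 1) * (C * x ^ (-A)) :=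
              mul_le_mul_of_nonneg_left hb2 hxp
          _ = C * x ^ (ξ + j - 1 - A) := by
              have he : x ^ (ξ + (j:ℝ) - 1 - A) = x ^ (ξ + (j:ℝ) - 1) * x ^ (-A) := by
                rw [← Real.rpow_add hx0]; ring_nf
              rw [he]; ring
          _ ≤ C * x ^ (ξ + J - 1 - A) := by
              have hle : x ^ (ξ + (j:ℝ) - 1 - A) ≤ x ^ (ξ + (J:ℝ) - 1 - A) :=
                Real.rpow_le_rpow_of_exponent_le hx.le (by
                  have : (j:ℝ) ≤ (J:ℝ) := Nat.cast_le.2 hj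
                  linarith)
              exact mul_le_mul_of_nonneg_left hle hC.le
    have hu : Set.Ioc (0:ℝ) 1 ∪ Set.Ioi 1 = Set.Ioi 0 := Set.Ioc_union_Ioi_eq_Ioi zero_le_one
    rw [← hu]
    exact h01.union h1i
  have part1 : ∀ u : ℂ, u.re = ξ →
      MeasureTheory.IntegrableOn (fun t : ℝ => ((t : ℂ)) ^ (u - 1) * φ t) (Set.Ioi 0) := by
    intro u hu
    have h := hInt 0 (by omega) (u - 1) (by rw [Complex.sub_re, hu]; norm_num)
    simpa [hΦ] using h
  set M : ℕ → ℝ := fun j => ∫ x in Set.Ioi (0:ℝ), x ^ (ξ + (j:ℝ) - 1) * ‖Φ j x‖ with hM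
  have hMnn : ∀ j : ℕ, 0 ≤ M j := fun j =>
    MeasureTheory.setIntegral_nonneg measurableSet_Ioi
      (fun x hx => mul_nonneg (Real.rpow_nonneg (le_of_lt hx) _) (norm_nonneg _))
  have hMb : ∀ j : ℕ, j ≤ J → ∀ w : ℂ, w.re = ξ + j - 1 →
      ‖∫ x in Set.Ioi (0:ℝ), (x:ℂ)^w * Φ j x‖ ≤ M j := by
    intro j hj w hw
    apply MeasureTheory.norm_integral_le_of_norm_le
    · have h := (hInt j hj ((ξ + (j:ℝ) - 1 : ℝ) : ℂ) (by simp)).norm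
      apply h.congr
      filter_upwards [MeasureTheory.ae_restrict_mem measurableSet_Ioi] with x hx
      rw [hnormeq _ _ x hx, Complex.ofReal_re]
    · rw [MeasureTheory.ae_restrict_iff' measurableSet_Ioi]
      filter_upwards with x hx
      rw [hnormeq w _ x hx, hw]
  -- integration by parts step
  have step : ∀ t : ℝ, 1 ≤ |t| → ∀ j : ℕ, j < J →
      ‖∫ x in Set.Ioi (0:ℝ), (x:ℂ)^(((ξ:ℂ) + (t:ℂ) * Complex.I) + (j:ℂ) - 1) * Φ j x‖ ≤
        |t|⁻¹ * ‖∫ x in Set.Ioi (0:ℝ),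
          (x:ℂ)^(((ξ:ℂ) + (t:ℂ) * Complex.I) + ((j+1:ℕ):ℂ) - 1) * Φ (j+1) x‖ := by
    intro t ht j hj
    set c : ℂ := ((ξ:ℂ) + (t:ℂ) * Complex.I) + (j:ℂ) with hc
    have hcim : c.im = t := by simp [hc]
    have hcre : c.re = ξ + j := by simp [hc]
    have ht0 : (0:ℝ) < |t| := lt_of_lt_of_le one_pos ht
    have hc0 : c ≠ 0 := by
      intro h
      rw [← hcim, h] at ht0
      simp at ht0
    have hcabs : |t| ≤ ‖c‖ := by
      have := Complex.abs_im_le_norm c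
      rwa [hcim] at this
    have hcpos : (0:ℝ) < ‖c‖ := lt_of_lt_of_le ht0 hcabs
    have hcastj : (((j+1:ℕ)):ℂ) = (j:ℂ) + 1 := by push_cast; ring
    have hexp : ((ξ:ℂ) + (t:ℂ) * Complex.I) + ((j+1:ℕ):ℂ) - 1 = c := by
      rw [hcastj, hc]; ring
    rw [hexp]
    -- the IBP identity
    set g : ℝ → ℂ := fun x => (x:ℂ)^c / c * Φ j x with hg
    set f' : ℝ → ℂ := fun x => (x:ℂ)^(c-1) * Φ j x + (x:ℂ)^c / c * Φ (j+1) x with hf'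
    have hderiv : ∀ x ∈ Set.Ioi (0:ℝ), HasDerivAt g (f' x) x := by
      intro x hx
      have h1 : HasDerivAt (fun y : ℝ => (y:ℂ)^c / c) ((x:ℂ)^(c-1)) x := by
        have hr : c - 1 ≠ -1 := by
          intro h
          apply hc0
          have := congrArg (· + 1) h
          simpa using this
        have := hasDerivAt_ofReal_cpow_const' (ne_of_gt (show (0:ℝ) < x from hx)) hr
        simpa using this
      exact h1.mul (hder j hj x hx)
    have hnormg : ∀ x : ℝ, 0 < x → ‖g x‖ = x ^ (ξ + (j:ℝ)) / ‖c‖ * ‖Φ j x‖ := by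
      intro x hx
      rw [hg]
      simp only [norm_mul, norm_div,
        norm_cpow_eq_rpow_re_of_pos hx, hcre]
      try rw [← Complex.norm_eq_abs]
      try ring
    have hg0 : g 0 = 0 := by
      rw [hg]
      simp [Complex.zero_cpow hc0]
    have hcont0 : ContinuousWithinAt g (Set.Ici 0) 0 := by
      rw [ContinuousWithinAt, hg0]
      apply squeeze_zero_norm' (a := fun x : ℝ => C / ‖c‖ * x ^ (ξ + (J:ℝ)))
      · filter_upwards [self_mem_nhdsWithin] with x hx
        rcases eq_or_lt_of_le (show (0:ℝ) ≤ x from hx) with h0 | h0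
        · rw [← h0, hg0]
          simp [Real.zero_rpow (ne_of_gt (show (0:ℝ) < ξ + (J:ℝ) by linarith))]
        · rw [hnormg x h0]
          have hb := hpow j (le_of_lt hj) x (le_of_lt h0)
          have hxe : x ^ (ξ + (j:ℝ)) * x ^ ((J - j : ℕ):ℝ) = x ^ (ξ + (J:ℝ)) := by
            rw [← Real.rpow_add h0, hcast j (le_of_lt hj)]
            ring_nf
          have hxp : (0:ℝ) ≤ x ^ (ξ + (j:ℝ)) := Real.rpow_nonneg (le_of_lt h0) _
          calc x ^ (ξ + (j:ℝ)) / ‖c‖ * ‖Φ j x‖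
              ≤ x ^ (ξ + (j:ℝ)) / ‖c‖ * (C * x ^ (J - j)) := by
                apply mul_le_mul_of_nonneg_left _ (by positivity)
                rw [← Real.rpow_natCast x (J - j)] at hb ⊢
                exact hb
            _ = C / ‖c‖ * x ^ (ξ + (J:ℝ)) := by
                rw [← hxe, ← Real.rpow_natCast x (J - j)]
                field_simp
      · have hcc : ContinuousAt (fun x : ℝ => x ^ (ξ + (J:ℝ))) 0 :=
          Real.continuousAt_rpow_const 0 _ (Or.inr (by linarith))
        have h0 : (0:ℝ) ^ (ξ + (J:ℝ)) = 0 := Real.zero_rpow (ne_of_gt (show (0:ℝ) < ξ + (J:ℝ) by linarith))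
        have htd : Filter.Tendsto (fun x : ℝ => C / ‖c‖ * x ^ (ξ + (J:ℝ)))
            (nhdsWithin 0 (Set.Ici 0)) (nhds (C / ‖c‖ * (0:ℝ) ^ (ξ + (J:ℝ)))) :=
          (hcc.tendsto.mono_left nhdsWithin_le_nhds).const_mul _
        rw [h0, mul_zero] at htd
        exact htd
    have htop : Filter.Tendsto g Filter.atTop (nhds 0) := by
      apply squeeze_zero_norm' (a := fun x : ℝ => C / ‖c‖ * x ^ (ξ + (j:ℝ) - A))
      · filter_upwards [Filter.eventually_ge_atTop 1] with x hx
        have h0 : (0:ℝ) < x := lt_of_lt_of_le one_pos hx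
        rw [hnormg x h0]
        have hb := hφb j (le_of_lt hj) x (le_of_lt h0)
        have h2 : (1 + x) ^ (-A) ≤ x ^ (-A) :=
          Real.rpow_le_rpow_of_nonpos h0 (by linarith) (by linarith)
        have hb2 : ‖Φ j x‖ ≤ C * x ^ (-A) :=
          le_trans hb (mul_le_mul_of_nonneg_left h2 hC.le)
        have hxe : x ^ (ξ + (j:ℝ)) * x ^ (-A) = x ^ (ξ + (j:ℝ) - A) := by
          rw [← Real.rpow_add h0]; ring_nf
        calc x ^ (ξ + (j:ℝ)) / ‖c‖ * ‖Φ j x‖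
            ≤ x ^ (ξ + (j:ℝ)) / ‖c‖ * (C * x ^ (-A)) := by
              apply mul_le_mul_of_nonneg_left hb2 (by positivity)
          _ = C / ‖c‖ * x ^ (ξ + (j:ℝ) - A) := by
              rw [← hxe]; field_simp
      · have hy : (0:ℝ) < A - (ξ + (j:ℝ)) := by
          have h1 : (j:ℝ) ≤ (J:ℝ) := Nat.cast_le.2 (le_of_lt hj)
          linarith
        have := (tendsto_rpow_neg_atTop hy).const_mul (C / ‖c‖)
        rw [mul_zero] at this
        apply this.congr'
        filter_upwards with x
        rw [neg_sub]
        try ring_nf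
    have hre1 : (c - 1).re = ξ + (j:ℝ) - 1 := by rw [Complex.sub_re, hcre]; norm_num
    have hre2 : c.re = ξ + ((j+1:ℕ):ℝ) - 1 := by rw [hcre]; push_cast; ring
    have hint1 := hInt j (le_of_lt hj) (c - 1) hre1
    have hint2 := hInt (j+1) hj c hre2
    have heq2 : (fun x : ℝ => (x:ℂ)^c / c * Φ (j+1) x)
        = fun x : ℝ => ((x:ℂ)^c * Φ (j+1) x) * c⁻¹ := by
      funext x; ring
    have hint2' : MeasureTheory.IntegrableOn
        (fun x : ℝ => (x:ℂ)^c / c * Φ (j+1) x) (Set.Ioi 0) := by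
      rw [heq2]
      exact hint2.mul_const _
    have f'int : MeasureTheory.IntegrableOn f' (Set.Ioi 0) := hint1.add hint2'
    have hFTC : ∫ x in Set.Ioi (0:ℝ), f' x = 0 - g 0 :=
      MeasureTheory.integral_Ioi_of_hasDerivAt_of_tendsto hcont0 hderiv f'int htop
    rw [hg0, sub_zero] at hFTC
    have hsplit : ∫ x in Set.Ioi (0:ℝ), f' x =
        (∫ x in Set.Ioi (0:ℝ), (x:ℂ)^(c-1) * Φ j x) +
        ∫ x in Set.Ioi (0:ℝ), (x:ℂ)^c / c * Φ (j+1) x :=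
      MeasureTheory.integral_add hint1 hint2'
    have hsecond : (∫ x in Set.Ioi (0:ℝ), (x:ℂ)^c / c * Φ (j+1) x)
        = (∫ x in Set.Ioi (0:ℝ), (x:ℂ)^c * Φ (j+1) x) * c⁻¹ := by
      rw [heq2]
      exact MeasureTheory.integral_mul_const _ _
    have hkey : (∫ x in Set.Ioi (0:ℝ), (x:ℂ)^(c-1) * Φ j x)
        = -((∫ x in Set.Ioi (0:ℝ), (x:ℂ)^c * Φ (j+1) x) * c⁻¹) := by
      rw [hsplit, hsecond] at hFTC
      linear_combination hFTC
    have hexp1 : ((ξ:ℂ) + (t:ℂ) * Complex.I) + (j:ℂ) - 1 = c - 1 := by rw [hc]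
    rw [hexp1, hkey, norm_neg, norm_mul, norm_inv]
    rw [mul_comm]
    exact mul_le_mul_of_nonneg_right (inv_anti₀ ht0 hcabs) (norm_nonneg _)
  have hI0eq : ∀ t : ℝ, (fun x : ℝ => (x:ℂ) ^ (((ξ:ℂ) + (t:ℂ) * Complex.I) - 1) * φ x)
      = fun x : ℝ => (x:ℂ) ^ (((ξ:ℂ) + (t:ℂ) * Complex.I) + ((0:ℕ):ℂ) - 1) * Φ 0 x := by
    intro t; funext x; simp [hΦ]
  refine ⟨part1, (2:ℝ)^J * max (M 0) (M J), fun t => ?_⟩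
  have hsre : ∀ j : ℕ, (((ξ:ℂ) + (t:ℂ) * Complex.I) + (j:ℂ) - 1).re = ξ + j - 1 := by
    intro j; simp
  have hmax0 : (0:ℝ) ≤ max (M 0) (M J) := le_trans (hMnn 0) (le_max_left _ _)
  by_cases ht : 1 ≤ |t|
  · have habs0 : (0:ℝ) < |t| := lt_of_lt_of_le one_pos ht
    have iter : ∀ j : ℕ, j ≤ J →
        ‖∫ x in Set.Ioi (0:ℝ),
            (x:ℂ)^(((ξ:ℂ) + (t:ℂ) * Complex.I) + ((0:ℕ):ℂ) - 1) * Φ 0 x‖ ≤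
          (|t|⁻¹)^j * ‖∫ x in Set.Ioi (0:ℝ),
            (x:ℂ)^(((ξ:ℂ) + (t:ℂ) * Complex.I) + (j:ℂ) - 1) * Φ j x‖ := by
      intro j hj
      induction j with
      | zero => simp
      | succ j ih =>
        refine le_trans (ih (by omega)) (le_trans
          (mul_le_mul_of_nonneg_left (step t ht j (by omega)) (by positivity))
          (le_of_eq (by ring)))
    have hfinal := iter J le_rfl
    have hMJ := hMb J le_rfl (((ξ:ℂ) + (t:ℂ) * Complex.I) + (J:ℂ) - 1) (hsre J)
    have hp1 : (0:ℝ) < (1+|t|)^(J:ℕ) := by positivity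
    have h1 : (1+|t|) ^ (-(J:ℝ)) = ((1+|t|)^(J:ℕ))⁻¹ := by
      rw [Real.rpow_neg (by positivity), Real.rpow_natCast]
    have h2 : (1+|t|)^(J:ℕ) ≤ 2^(J:ℕ) * |t|^(J:ℕ) := by
      calc (1+|t|)^(J:ℕ) ≤ (2*|t|)^(J:ℕ) := pow_le_pow_left₀ (by positivity) (by linarith) J
        _ = 2^(J:ℕ) * |t|^(J:ℕ) := mul_pow 2 |t| J
    have hkeyn : (|t|⁻¹)^(J:ℕ) ≤ 2^(J:ℕ) * (1+|t|) ^ (-(J:ℝ)) := by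
      have h3 : (1:ℝ)/|t|^(J:ℕ) ≤ (2^(J:ℕ))/((1+|t|)^(J:ℕ)) := by
        rw [div_le_div_iff₀ (by positivity) hp1]
        linarith [h2]
      calc (|t|⁻¹)^(J:ℕ) = 1/|t|^(J:ℕ) := by rw [inv_pow, one_div]
        _ ≤ 2^(J:ℕ)/((1+|t|)^(J:ℕ)) := h3
        _ = 2^(J:ℕ) * (1+|t|)^(-(J:ℝ)) := by rw [h1, div_eq_mul_inv]
    rw [hI0eq t]
    calc ‖∫ x in Set.Ioi (0:ℝ),
          (x:ℂ)^(((ξ:ℂ) + (t:ℂ) * Complex.I) + ((0:ℕ):ℂ) - 1) * Φ 0 x‖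
        ≤ (|t|⁻¹)^(J:ℕ) * M J :=
          le_trans hfinal (mul_le_mul_of_nonneg_left hMJ (by positivity))
      _ ≤ (2^(J:ℕ) * (1+|t|)^(-(J:ℝ))) * max (M 0) (M J) :=
          mul_le_mul hkeyn (le_max_right _ _) (hMnn J) (by positivity)
      _ = 2^(J:ℕ) * max (M 0) (M J) * (1+|t|)^(-(J:ℝ)) := by ring
  · push_neg at ht
    have hT : ‖∫ x in Set.Ioi (0:ℝ), (x:ℂ)^(((ξ:ℂ) + (t:ℂ) * Complex.I) - 1) * φ x‖ ≤ M 0 := by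
      rw [hI0eq t]
      exact hMb 0 (by omega) _ (hsre 0)
    have h3 : (2:ℝ) ^ (-(J:ℝ)) ≤ (1+|t|) ^ (-(J:ℝ)) :=
      Real.rpow_le_rpow_of_nonpos (by positivity)
        (by linarith [abs_nonneg t]) (neg_nonpos.2 (Nat.cast_nonneg J))
    have h4 : (2:ℝ)^(J:ℕ) * (2:ℝ)^(-(J:ℝ)) = 1 := by
      rw [Real.rpow_neg (by norm_num : (0:ℝ) ≤ 2), Real.rpow_natCast]
      field_simp
    calc ‖∫ x in Set.Ioi (0:ℝ), (x:ℂ)^(((ξ:ℂ) + (t:ℂ) * Complex.I) - 1) * φ x‖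
        ≤ M 0 := hT
      _ ≤ max (M 0) (M J) := le_max_left _ _
      _ = 2^(J:ℕ) * max (M 0) (M J) * (2:ℝ)^(-(J:ℝ)) := by
          rw [mul_comm ((2:ℝ)^(J:ℕ)) (max (M 0) (M J)), mul_assoc, h4, mul_one]
      _ ≤ 2^(J:ℕ) * max (M 0) (M J) * (1+|t|)^(-(J:ℝ)) :=
          mul_le_mul_of_nonneg_left h3 (mul_nonneg (by positivity) hmax0)
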